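/- arXiv:1402.5892 — 3 statements merged into one kernel-verified Lean document; each statement's English description precedes it below -/
import Mathlib

section
/- Let H be a real inner product space and let g, h : [0,1] → H be given by g(s) = (θ − s)·r (with θ ∈ [0,1], r ∈ H fixed) and h(s) = h₀ constant. Then (∫₀¹ ‖g(s) + h(s)‖² ds)^{1/2} ≥ √(5/14)·(1 − √3/2)·(∫₀¹ ‖g(s)‖² ds + ∫₀¹ ‖h(s)‖² ds)^{1/2}. -/
lemma decomposition_aux_ineq (A B a b c t : ℝ) (ha : 0 ≤ a) (hb : 0 ≤ b)
    (hA2 : A ≤ 1/3) (hB : B^2 ≤ A - 1/12) (hc : c^2 ≤ a*b)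
    (ht : t^2 = 3) (ht0 : 0 ≤ t) (ht2 : t ≤ 2) :
    5/14*(1-t/2)^2*(A*a+b) ≤ A*a + 2*B*c + b := by
  have hX0 : 0 ≤ A*a + b := by nlinarith
  have hBc : B^2*c^2 ≤ (A - 1/12)*(a*b) :=
    mul_le_mul hB hc (sq_nonneg c) (le_trans (sq_nonneg B) hB)
  have h1 : (2*B*c)^2 ≤ (t/2*(A*a+b))^2 := by
    nlinarith [sq_nonneg (A*a - b), mul_nonneg ha hb,
      mul_nonneg (mul_nonneg ha hb) (by linarith : (0:ℝ) ≤ 1/3 - A)]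
  have h2 := (abs_le_of_sq_le_sq' h1 (by positivity)).1
  nlinarith [mul_nonneg hX0 (by nlinarith : (0:ℝ) ≤ 1 - t/2)]

theorem decomposition_of_residual_lower_bound
    {H : Type*} [NormedAddCommGroup H] [InnerProductSpace ℝ H]
    (θ : ℝ) (hθ : θ ∈ Set.Icc (0 : ℝ) 1) (r h₀ : H) :
    Real.sqrt (5 / 14) * (1 - Real.sqrt 3 / 2) *
        Real.sqrt ((∫ s in (0 : ℝ)..1, ‖(θ - s) • r‖ ^ 2) +
          ∫ s in (0 : ℝ)..1, ‖h₀‖ ^ 2) ≤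
      Real.sqrt (∫ s in (0 : ℝ)..1, ‖(θ - s) • r + h₀‖ ^ 2) := by
  obtain ⟨hθ0, hθ1⟩ := hθ
  set a : ℝ := ‖r‖^2 with ha_def
  set b : ℝ := ‖h₀‖^2 with hb_def
  set c : ℝ := (inner ℝ r h₀ : ℝ) with hc_def
  have ha : 0 ≤ a := sq_nonneg _
  have hb : 0 ≤ b := sq_nonneg _
  have hcab : c^2 ≤ a * b := by
    have h := abs_real_inner_le_norm r h₀
    have h2 : c^2 = |c|^2 := (sq_abs c).symm
    nlinarith [abs_nonneg c, norm_nonneg r, norm_nonneg h₀]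
  -- integral computations
  have hg : (∫ s in (0:ℝ)..1, ‖(θ - s) • r‖ ^ 2) = (θ^2 - θ + 1/3) * a := by
    have he : ∀ s : ℝ, ‖(θ - s) • r‖ ^ 2 = (θ - s)^2 * a := by
      intro s
      rw [norm_smul]
      simp [mul_pow, sq_abs, ha_def]
    simp_rw [he]
    rw [intervalIntegral.integral_mul_const,
      intervalIntegral.integral_comp_sub_left (fun x => x^2) θ, integral_pow]
    push_cast
    ring
  have hh : (∫ s in (0:ℝ)..1, ‖h₀‖ ^ 2) = b := by simp [hb_def]
  have hsum : (∫ s in (0:ℝ)..1, ‖(θ - s) • r + h₀‖ ^ 2)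
      = (θ^2 - θ + 1/3) * a + 2*(θ - 1/2)*c + b := by
    have he : ∀ s : ℝ, ‖(θ - s) • r + h₀‖ ^ 2
        = (θ-s)^2 * a + (2*c) * (θ - s) + b := by
      intro s
      rw [@norm_add_sq_real, real_inner_smul_left, norm_smul]
      simp [mul_pow, sq_abs, ha_def, hb_def, hc_def]
      ring
    simp_rw [he]
    rw [intervalIntegral.integral_add
          (Continuous.intervalIntegrable (by continuity) _ _)
          (Continuous.intervalIntegrable (by continuity) _ _),
        intervalIntegral.integral_add
          (Continuous.intervalIntegrable (by continuity) _ _)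
          (Continuous.intervalIntegrable (by continuity) _ _),
        intervalIntegral.integral_mul_const, intervalIntegral.integral_const_mul,
        intervalIntegral.integral_const,
        intervalIntegral.integral_comp_sub_left (fun x => x^2) θ, integral_pow,
        intervalIntegral.integral_comp_sub_left (fun x => x) θ, integral_id]
    simp only [smul_eq_mul]
    push_cast
    ring
  rw [hg, hh, hsum]
  -- facts about √3
  have ht : (Real.sqrt 3)^2 = 3 := Real.sq_sqrt (by norm_num)
  have ht0 : 0 ≤ Real.sqrt 3 := Real.sqrt_nonneg 3
  have ht2 : Real.sqrt 3 ≤ 2 := by nlinarith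
  set t : ℝ := Real.sqrt 3
  -- rewrite LHS as a single square root
  have hL : Real.sqrt (5 / 14) * (1 - t / 2)
        * Real.sqrt ((θ^2 - θ + 1/3) * a + b)
      = Real.sqrt (5/14 * (1 - t/2)^2 * ((θ^2 - θ + 1/3) * a + b)) := by
    rw [Real.sqrt_mul (by positivity), Real.sqrt_mul (by norm_num : (0:ℝ) ≤ 5/14),
      Real.sqrt_sq (by nlinarith)]
  rw [hL]
  apply Real.sqrt_le_sqrt
  exact decomposition_aux_ineq (θ^2 - θ + 1/3) (θ - 1/2) a b c t ha hb
    (by nlinarith) (by nlinarith) hcab ht ht0 ht2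
end

section
/- Let V be a real Hilbert space with norm ‖·‖ and B a bilinear form on V satisfying B(v,v) ≥ ‖v‖² for all v. Let ℓ be a bounded linear functional, u ∈ V the solution of B(u,·) = ℓ, and suppose moreover B(v,w) ≤ C(‖v‖ + |v|_*)‖w‖ with C ≥ 1 and a seminorm |·|_*, together with the inf-sup bound inf_v sup_w B(v,w)/((‖v‖+|v|_*)‖w‖) ≥ 1/(2+C). Then c_♯ ‖ℓ‖_* ≤ ‖u‖ + |u|_* ≤ c^♯ ‖ℓ‖_* with c_♯ = 1/C and c^♯ = 2 + C, where ‖ℓ‖_* = sup_{v≠0} ℓ(v)/‖v‖. -/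
/-- The dual norm of a functional: `sup_{v ≠ 0} ℓ v / ‖v‖`. -/
noncomputable def dualNorm {V : Type*} [NormedAddCommGroup V] (L : V → ℝ) : ℝ :=
  ⨆ v : {v : V // v ≠ 0}, L v.1 / ‖v.1‖

theorem robust_stability_estimate
    {V : Type*} [NormedAddCommGroup V] [InnerProductSpace ℝ V] [CompleteSpace V]
    [Nontrivial V]
    (B : V →ₗ[ℝ] V →ₗ[ℝ] ℝ)
    (p : Seminorm ℝ V)
    (C : ℝ) (hC : 1 ≤ C)
    (hcoer : ∀ v : V, ‖v‖ ^ 2 ≤ B v v)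
    (hcont : ∀ v w : V, B v w ≤ C * (‖v‖ + p v) * ‖w‖)
    (hinfsup : (1 : ℝ) / (2 + C) ≤
      ⨅ v : {v : V // v ≠ 0}, ⨆ w : {w : V // w ≠ 0},
        B v.1 w.1 / ((‖v.1‖ + p v.1) * ‖w.1‖))
    (ℓ : V →L[ℝ] ℝ) (u : V) (hu : ∀ v : V, B u v = ℓ v) :
    (1 / C) * dualNorm (fun v => ℓ v) ≤ ‖u‖ + p u ∧
      ‖u‖ + p u ≤ (2 + C) * dualNorm (fun v => ℓ v) := by
  obtain ⟨v₀, hv₀⟩ := exists_ne (0 : V)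
  haveI : Nonempty {v : V // v ≠ 0} := ⟨⟨v₀, hv₀⟩⟩
  have hpu : 0 ≤ p u := apply_nonneg p u
  have hC0 : (0 : ℝ) < C := lt_of_lt_of_le one_pos hC
  have h2C : (0 : ℝ) < 2 + C := by linarith
  have hbound : ∀ v : {v : V // v ≠ 0}, ℓ v.1 / ‖v.1‖ ≤ C * (‖u‖ + p u) := by
    rintro ⟨v, hv⟩
    have hv' : (0 : ℝ) < ‖v‖ := norm_pos_iff.mpr hv
    rw [div_le_iff₀ hv']
    calc (ℓ v : ℝ) = B u v := (hu v).symm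
      _ ≤ C * (‖u‖ + p u) * ‖v‖ := hcont u v
  have hdn_le : dualNorm (fun v : V => ℓ v) ≤ C * (‖u‖ + p u) := ciSup_le hbound
  have hbdd : BddAbove (Set.range fun v : {v : V // v ≠ 0} => ℓ v.1 / ‖v.1‖) :=
    ⟨C * (‖u‖ + p u), by rintro x ⟨v, rfl⟩; exact hbound v⟩
  constructor
  · rw [one_div_mul_eq_div, div_le_iff₀ hC0]
    linarith [hdn_le]
  · rcases eq_or_ne u 0 with rfl | hu0
    · have hz : dualNorm (fun v : V => ℓ v) = 0 := by
        have : ∀ v : V, ℓ v = 0 := by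
          intro v; rw [← hu v]; simp
        unfold dualNorm
        have : (fun v : {v : V // v ≠ 0} => ℓ v.1 / ‖v.1‖) = fun _ => (0 : ℝ) := by
          funext v; rw [this v.1, zero_div]
        rw [this, ciSup_const]
      rw [hz]
      simp
    · have hden : (0 : ℝ) < ‖u‖ + p u := by
        have : (0 : ℝ) < ‖u‖ := norm_pos_iff.mpr hu0
        linarith
      -- outer family bounded below by 0
      have hinner_bdd : ∀ v : {v : V // v ≠ 0},
          BddAbove (Set.range fun w : {w : V // w ≠ 0} =>
            B v.1 w.1 / ((‖v.1‖ + p v.1) * ‖w.1‖)) := by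
        rintro ⟨v, hv⟩
        refine ⟨C, ?_⟩
        rintro x ⟨⟨w, hw⟩, rfl⟩
        have hv' : (0 : ℝ) < ‖v‖ := norm_pos_iff.mpr hv
        have hw' : (0 : ℝ) < ‖w‖ := norm_pos_iff.mpr hw
        have hdv : (0 : ℝ) < ‖v‖ + p v := by linarith [apply_nonneg p v]
        have hdd : (0 : ℝ) < (‖v‖ + p v) * ‖w‖ := mul_pos hdv hw'
        rw [div_le_iff₀ hdd]
        calc B v w ≤ C * (‖v‖ + p v) * ‖w‖ := hcont v w
          _ = C * ((‖v‖ + p v) * ‖w‖) := by ring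
      have hbelow : BddBelow (Set.range fun v : {v : V // v ≠ 0} =>
          ⨆ w : {w : V // w ≠ 0}, B v.1 w.1 / ((‖v.1‖ + p v.1) * ‖w.1‖)) := by
        refine ⟨0, ?_⟩
        rintro x ⟨⟨v, hv⟩, rfl⟩
        refine le_trans ?_ (le_ciSup (hinner_bdd ⟨v, hv⟩) ⟨v, hv⟩)
        have hv' : (0 : ℝ) < ‖v‖ := norm_pos_iff.mpr hv
        have hdv : (0 : ℝ) < ‖v‖ + p v := by linarith [apply_nonneg p v]
        have h0 : (0 : ℝ) ≤ B v v := le_trans (by positivity) (hcoer v)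
        positivity
      have hstep : (1 : ℝ) / (2 + C) ≤
          ⨆ w : {w : V // w ≠ 0}, B u w.1 / ((‖u‖ + p u) * ‖w.1‖) :=
        le_trans hinfsup (ciInf_le hbelow ⟨u, hu0⟩)
      have hsup_le : (⨆ w : {w : V // w ≠ 0}, B u w.1 / ((‖u‖ + p u) * ‖w.1‖)) ≤
          dualNorm (fun v : V => ℓ v) / (‖u‖ + p u) := by
        refine ciSup_le ?_
        rintro ⟨w, hw⟩
        have hw' : (0 : ℝ) < ‖w‖ := norm_pos_iff.mpr hw
        have h1 : ℓ w / ‖w‖ ≤ dualNorm (fun v : V => ℓ v) :=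
          le_ciSup hbdd ⟨w, hw⟩
        have heq : B u w / ((‖u‖ + p u) * ‖w‖) = (ℓ w / ‖w‖) / (‖u‖ + p u) := by
          rw [hu w, div_div, mul_comm]
        rw [heq]
        gcongr
      have hfin : (1 : ℝ) / (2 + C) ≤ dualNorm (fun v : V => ℓ v) / (‖u‖ + p u) :=
        le_trans hstep hsup_le
      rw [div_le_div_iff₀ h2C hden] at hfin
      linarith [hfin]
end

section
/- Let f : [0,1] → ℝ be f(s) = (θ − s)r + c with fixed θ ∈ [0,1] and r, c ∈ ℝ. Then ∫₀¹ f(s)² ds = (θ² − θ + 1/3) r² + (2θ − 1) r c + c², and this quadratic form in (r,c) is bounded below by λ(r² + c²) where λ > 0 is the smallest eigenvalue of the matrix [[θ²−θ+1/3, θ−1/2],[θ−1/2, 1]]; moreover λ ≥ 5/14·(1 − √3/2)² for all θ ∈ [0,1]. -/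
theorem affine_plus_constant_L2_identity_and_lower_bound
    (θ r c : ℝ) (hθ : θ ∈ Set.Icc (0 : ℝ) 1) :
    (∫ s in (0 : ℝ)..1, ((θ - s) * r + c) ^ 2) =
        (θ ^ 2 - θ + 1 / 3) * r ^ 2 + (2 * θ - 1) * r * c + c ^ 2 ∧
      ∀ lam : ℝ,
        lam = ((θ ^ 2 - θ + 1 / 3 + 1) -
            Real.sqrt ((θ ^ 2 - θ + 1 / 3 + 1) ^ 2 -
              4 * ((θ ^ 2 - θ + 1 / 3) * 1 - (θ - 1 / 2) ^ 2))) / 2 →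
          0 < lam ∧
          lam * (r ^ 2 + c ^ 2) ≤ (∫ s in (0 : ℝ)..1, ((θ - s) * r + c) ^ 2) ∧
          5 / 14 * (1 - Real.sqrt 3 / 2) ^ 2 ≤ lam := by
  obtain ⟨hθ0, hθ1⟩ := hθ
  have sqle : ∀ x y : ℝ, 0 ≤ y → x ^ 2 ≤ y ^ 2 → x ≤ y := fun x y hy h => by
    nlinarith [sq_nonneg (x - y), sq_nonneg (x + y)]
  -- the integral identity
  have hint : (∫ s in (0 : ℝ)..1, ((θ - s) * r + c) ^ 2) =
      (θ ^ 2 - θ + 1 / 3) * r ^ 2 + (2 * θ - 1) * r * c + c ^ 2 := by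
    have h1 : ∀ s : ℝ, ((θ - s) * r + c) ^ 2 =
        r ^ 2 * s ^ 2 - 2 * r * (θ * r + c) * s + (θ * r + c) ^ 2 := fun s => by ring
    simp_rw [h1]
    have i1 : IntervalIntegrable (fun x : ℝ => r ^ 2 * x ^ 2) MeasureTheory.volume 0 1 :=
      (Continuous.intervalIntegrable (by fun_prop) _ _)
    have i2 : IntervalIntegrable (fun x : ℝ => 2 * r * (θ * r + c) * x) MeasureTheory.volume 0 1 :=
      (Continuous.intervalIntegrable (by fun_prop) _ _)
    rw [intervalIntegral.integral_add (i1.sub i2) intervalIntegrable_const,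
      intervalIntegral.integral_sub i1 i2,
      intervalIntegral.integral_const_mul, intervalIntegral.integral_const_mul,
      integral_pow, integral_id, intervalIntegral.integral_const]
    push_cast
    simp only [smul_eq_mul]
    ring
  refine ⟨hint, fun lam hlam => ?_⟩
  set a : ℝ := θ ^ 2 - θ + 1 / 3 with ha
  set b : ℝ := θ - 1 / 2 with hb
  have hab : a = b ^ 2 + 1 / 12 := by rw [ha, hb]; ring
  have hb2 : 2 * θ - 1 = 2 * b := by rw [hb]; ring
  clear_value a b
  have ha1 : 1 / 12 ≤ a := by linarith [sq_nonneg b]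
  have ha2 : a ≤ 1 / 3 := by
    rw [ha]; nlinarith [mul_nonneg hθ0 (sub_nonneg.2 hθ1)]
  have hD : (a + 1) ^ 2 - 4 * (a * 1 - b ^ 2) = (a + 1) ^ 2 - 1 / 3 := by
    rw [hab]; ring
  have hDpos : (0:ℝ) ≤ (a + 1) ^ 2 - 1 / 3 := by linarith [sq_nonneg a]
  set s := Real.sqrt ((a + 1) ^ 2 - 4 * (a * 1 - b ^ 2)) with hs
  have hs2 : s ^ 2 = (a + 1) ^ 2 - 1 / 3 := by
    rw [hs, hD, sq, Real.mul_self_sqrt hDpos]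
  have hsnn : 0 ≤ s := Real.sqrt_nonneg _
  clear_value s
  have hslt : s < a + 1 := by
    have h' : s ^ 2 < (a + 1) ^ 2 := by rw [hs2]; linarith
    exact lt_of_pow_lt_pow_left₀ 2 (by linarith) h'
  have hlampos : 0 < lam := by rw [hlam]; linarith
  -- lam ≤ a and lam ≤ 1
  have hlam1 : lam ≤ 1 := by rw [hlam]; linarith
  have hlama : lam ≤ a := by
    have h' : (1 - a) ^ 2 ≤ s ^ 2 := by rw [hs2]; linarith
    have h'' : 1 - a ≤ s := sqle _ _ hsnn h'
    rw [hlam]; linarith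
  -- characteristic equation
  have hchar : lam ^ 2 - (a + 1) * lam + (a - b ^ 2) = 0 := by
    have hab' : a - b ^ 2 = 1 / 12 := by rw [hab]; ring
    rw [hab', hlam]
    linear_combination (1/4 : ℝ) * hs2
  have hprod : (a - lam) * (1 - lam) = b ^ 2 := by linear_combination hchar
  have hspos : 0 < s := by
    rcases eq_or_lt_of_le hsnn with h | h
    · exfalso
      have : s ^ 2 = 0 := by rw [← h]; ring
      rw [hs2] at this
      linarith [sq_nonneg a]
    · exact h
  have hsum : a + 1 - 2 * lam = s := by rw [hlam]; ring
  refine ⟨hlampos, ?_, ?_⟩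
  · rw [hint]
    have hE : 0 ≤ s * ((a - lam) * r ^ 2 + 2 * b * r * c + (1 - lam) * c ^ 2) := by
      have hid : s * ((a - lam) * r ^ 2 + 2 * b * r * c + (1 - lam) * c ^ 2) =
          ((a - lam) * r + b * c) ^ 2 + (b * r + (1 - lam) * c) ^ 2 := by
        linear_combination ((a - lam) * r ^ 2 + 2 * b * r * c + (1 - lam) * c ^ 2) * hsum.symm
          + (r ^ 2 + c ^ 2) * hprod
      rw [hid]
      positivity
    have key : 0 ≤ (a - lam) * r ^ 2 + 2 * b * r * c + (1 - lam) * c ^ 2 := by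
      rcases lt_or_ge ((a - lam) * r ^ 2 + 2 * b * r * c + (1 - lam) * c ^ 2) 0 with h | h
      · exfalso
        have := mul_pos hspos (neg_pos.mpr h)
        rw [mul_neg] at this
        linarith
      · exact h
    rw [hb2]
    linarith [key]
  · -- numeric bound
    have h3 : (1.7318 : ℝ) ≤ Real.sqrt 3 := by
      have : (1.7318 : ℝ) = Real.sqrt (1.7318 ^ 2) := by
        rw [Real.sqrt_sq]; norm_num
      rw [this]
      exact Real.sqrt_le_sqrt (by norm_num)
    have h3' : Real.sqrt 3 ≤ 2 := by
      have : (2 : ℝ) = Real.sqrt (2 ^ 2) := by rw [Real.sqrt_sq]; norm_num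
      rw [this]
      exact Real.sqrt_le_sqrt (by norm_num)
    have hbound : 5 / 14 * (1 - Real.sqrt 3 / 2) ^ 2 ≤ 13 / 2000 := by
      have e1 : 0 ≤ 1 - Real.sqrt 3 / 2 := by linarith
      have e2 : 1 - Real.sqrt 3 / 2 ≤ 0.1341 := by linarith
      have e3 : (1 - Real.sqrt 3 / 2) ^ 2 ≤ 0.1341 ^ 2 := by
        apply pow_le_pow_left₀ e1 e2
      linarith [e3]
    have hlamlb : 13 / 2000 ≤ lam := by
      have h' : s ^ 2 ≤ (a + 1 - 13 / 1000) ^ 2 := by rw [hs2]; linarith [ha2]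
      have hsle : s ≤ a + 1 - 13 / 1000 := sqle _ _ (by linarith) h'
      rw [hlam]; linarith
    linarith
end
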